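/- For every fixed u, v ∈ [0,1], the mapping (s,t) ↦ ψ(s,t;u,v) is continuously differentiable on the open set {(s,t) ∈ ℝ² : 0 < s < t}, where ψ is the Brownian-copula kernel. -/

import Mathlib

open MeasureTheory Set Filter

/-- Density of the standard normal distribution (φ). -/
noncomputable def stdNormalPDF (x : ℝ) : ℝ := (Real.sqrt (2 * Real.pi))⁻¹ * Real.exp (-x ^ 2 / 2)

/-- Cumulative distribution function of the standard normal distribution (Φ). -/
noncomputable def stdNormalCDF (x : ℝ) : ℝ := ∫ t in Set.Iic x, stdNormalPDF t

/-- The standard normal quantile function (Φ⁻¹), the inverse of Φ on (0,1). -/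
noncomputable def stdNormalCDFInv : ℝ → ℝ := Function.invFun stdNormalCDF

/-- The integrand of the Brownian-copula kernel; the `if` branches encode the
conventions Φ⁻¹(0) = -∞ (so Φ(·) = 0) and Φ⁻¹(1) = +∞ (so Φ(·) = 1). -/
noncomputable def psiIntegrand (s t v w : ℝ) : ℝ :=
  if v ≤ 0 then 0
  else if 1 ≤ v then 1
  else stdNormalCDF ((Real.sqrt (max s t) * stdNormalCDFInv v -
      Real.sqrt (min s t) * stdNormalCDFInv w) / Real.sqrt |t - s|)

/-- The Brownian-copula kernel ψ(s,t;u,v). -/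
noncomputable def psi (s t u v : ℝ) : ℝ :=
  if 0 < |t - s| then ∫ w in (0:ℝ)..u, psiIntegrand s t v w
  else if 0 < t then min u v
  else u * v


lemma sqrt2pi_pos : 0 < Real.sqrt (2 * Real.pi) :=
  Real.sqrt_pos.2 (by positivity)

lemma pdf_pos (x : ℝ) : 0 < stdNormalPDF x := by
  unfold stdNormalPDF; positivity

lemma pdf_cont : Continuous stdNormalPDF := by
  unfold stdNormalPDF; fun_prop

lemma pdf_le (x : ℝ) : stdNormalPDF x ≤ (Real.sqrt (2 * Real.pi))⁻¹ := by
  unfold stdNormalPDF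
  have : Real.exp (-x ^ 2 / 2) ≤ 1 := by
    rw [Real.exp_le_one_iff]; nlinarith [sq_nonneg x]
  nlinarith [inv_pos.2 sqrt2pi_pos]

lemma pdf_eq (x : ℝ) : stdNormalPDF x
    = (Real.sqrt (2 * Real.pi))⁻¹ * Real.exp (-(2⁻¹ : ℝ) * x ^ 2) := by
  unfold stdNormalPDF; ring_nf

lemma pdf_integrable : Integrable stdNormalPDF := by
  have h := (integrable_exp_neg_mul_sq (by norm_num : (0:ℝ) < 2⁻¹)).const_mul
    (Real.sqrt (2 * Real.pi))⁻¹
  refine h.congr (Filter.Eventually.of_forall fun x => ?_)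
  rw [pdf_eq]

lemma pdf_integral : ∫ x, stdNormalPDF x = 1 := by
  have h1 : ∫ x, stdNormalPDF x
      = (Real.sqrt (2 * Real.pi))⁻¹ * ∫ x : ℝ, Real.exp (-(2⁻¹:ℝ) * x ^ 2) := by
    rw [← integral_const_mul]
    exact integral_congr_ae (Filter.Eventually.of_forall fun x => pdf_eq x)
  rw [h1, integral_gaussian]
  have : Real.pi / 2⁻¹ = 2 * Real.pi := by ring
  rw [this, inv_mul_cancel₀ sqrt2pi_pos.ne']

lemma cdf_eq (x : ℝ) : stdNormalCDF x = stdNormalCDF 0 + ∫ t in (0:ℝ)..x, stdNormalPDF t := by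
  have := intervalIntegral.integral_Iic_sub_Iic (f := stdNormalPDF) (μ := volume)
    (pdf_integrable.integrableOn) (pdf_integrable.integrableOn) (a := 0) (b := x)
  unfold stdNormalCDF
  linarith [this]

lemma cdf_hasDerivAt (x : ℝ) : HasDerivAt stdNormalCDF (stdNormalPDF x) x := by
  have h : HasDerivAt (fun y => ∫ t in (0:ℝ)..y, stdNormalPDF t) (stdNormalPDF x) x :=
    intervalIntegral.integral_hasDerivAt_right pdf_integrable.intervalIntegrable
      pdf_cont.stronglyMeasurable.stronglyMeasurableAtFilter pdf_cont.continuousAt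
  have : HasDerivAt (fun y => stdNormalCDF 0 + ∫ t in (0:ℝ)..y, stdNormalPDF t)
      (stdNormalPDF x) x := h.const_add _
  exact this.congr_of_eventuallyEq (Filter.Eventually.of_forall fun y => cdf_eq y)

lemma cdf_cont : Continuous stdNormalCDF :=
  continuous_iff_continuousAt.2 fun x => (cdf_hasDerivAt x).continuousAt

lemma cdf_strictMono : StrictMono stdNormalCDF :=
  strictMono_of_hasDerivAt_pos cdf_hasDerivAt pdf_pos

lemma cdf_tendsto_atTop : Tendsto stdNormalCDF atTop (nhds 1) := by
  have h : Tendsto (fun b => ∫ t in (0:ℝ)..b, stdNormalPDF t) atTop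
      (nhds (∫ t in Ioi (0:ℝ), stdNormalPDF t)) :=
    intervalIntegral_tendsto_integral_Ioi 0 pdf_integrable.integrableOn tendsto_id
  have h2 : Tendsto (fun b => stdNormalCDF 0 + ∫ t in (0:ℝ)..b, stdNormalPDF t) atTop
      (nhds (stdNormalCDF 0 + ∫ t in Ioi (0:ℝ), stdNormalPDF t)) := h.const_add _
  have h3 : stdNormalCDF 0 + ∫ t in Ioi (0:ℝ), stdNormalPDF t = 1 := by
    unfold stdNormalCDF
    rw [intervalIntegral.integral_Iic_add_Ioi pdf_integrable.integrableOn
      pdf_integrable.integrableOn, pdf_integral]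
  rw [h3] at h2
  exact h2.congr fun b => (cdf_eq b).symm

lemma cdf_tendsto_atBot : Tendsto stdNormalCDF atBot (nhds 0) := by
  have h : Tendsto (fun a => ∫ t in (a:ℝ)..0, stdNormalPDF t) atBot
      (nhds (∫ t in Iic (0:ℝ), stdNormalPDF t)) :=
    intervalIntegral_tendsto_integral_Iic 0 pdf_integrable.integrableOn tendsto_id
  have h2 : Tendsto (fun a => stdNormalCDF 0 - ∫ t in (a:ℝ)..0, stdNormalPDF t) atBot
      (nhds (stdNormalCDF 0 - ∫ t in Iic (0:ℝ), stdNormalPDF t)) := h.const_sub _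
  have h3 : stdNormalCDF 0 - ∫ t in Iic (0:ℝ), stdNormalPDF t = 0 := by
    unfold stdNormalCDF; ring
  rw [h3] at h2
  refine h2.congr fun a => ?_
  have := cdf_eq a
  rw [intervalIntegral.integral_symm] at this
  linarith

lemma cdf_mem_Ioo (x : ℝ) : stdNormalCDF x ∈ Ioo (0:ℝ) 1 := by
  constructor
  · have h1 : (0:ℝ) ≤ stdNormalCDF (x - 1) := by
      refine le_of_tendsto cdf_tendsto_atBot ?_
      filter_upwards [eventually_le_atBot (x - 1)] with z hz
      exact cdf_strictMono.monotone hz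
    linarith [cdf_strictMono (show x - 1 < x by linarith)]
  · have h1 : stdNormalCDF (x + 1) ≤ 1 := by
      refine ge_of_tendsto cdf_tendsto_atTop ?_
      filter_upwards [eventually_ge_atTop (x + 1)] with z hz
      exact cdf_strictMono.monotone hz
    linarith [cdf_strictMono (show x < x + 1 by linarith)]

lemma cdf_surj {y : ℝ} (hy : y ∈ Ioo (0:ℝ) 1) : ∃ x, stdNormalCDF x = y := by
  obtain ⟨a, ha⟩ := (cdf_tendsto_atBot.eventually_lt_const hy.1).exists
  obtain ⟨b, hb⟩ := (cdf_tendsto_atTop.eventually_const_lt hy.2).exists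
  have hab : a ≤ b := le_of_lt (cdf_strictMono.lt_iff_lt.1 (ha.trans hb))
  have := intermediate_value_Icc hab cdf_cont.continuousOn
  obtain ⟨x, _, hx⟩ := this ⟨ha.le, hb.le⟩
  exact ⟨x, hx⟩

lemma cdfInv_cdf (x : ℝ) : stdNormalCDFInv (stdNormalCDF x) = x :=
  Function.leftInverse_invFun cdf_strictMono.injective x

lemma cdf_cdfInv {y : ℝ} (hy : y ∈ Ioo (0:ℝ) 1) : stdNormalCDF (stdNormalCDFInv y) = y :=
  Function.invFun_eq (cdf_surj hy)

/-- The linear functional `q ↦ q.1 - x * q.2`. -/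
noncomputable def ell (x : ℝ) : ℝ × ℝ →L[ℝ] ℝ :=
  ContinuousLinearMap.fst ℝ ℝ ℝ - x • ContinuousLinearMap.snd ℝ ℝ ℝ

lemma ell_apply (x : ℝ) (q : ℝ × ℝ) : ell x q = q.1 - x * q.2 := rfl

lemma ell_norm_le (x : ℝ) : ‖ell x‖ ≤ 1 + |x| := by
  refine ContinuousLinearMap.opNorm_le_bound _ (by positivity) fun q => ?_
  rw [ell_apply]
  have h1 : |q.1| ≤ ‖q‖ := norm_fst_le q
  have h2 : |q.2| ≤ ‖q‖ := norm_snd_le q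
  calc ‖q.1 - x * q.2‖ ≤ |q.1| + |x * q.2| := norm_sub_le _ _
    _ = |q.1| + |x| * |q.2| := by rw [abs_mul]
    _ ≤ ‖q‖ + |x| * ‖q‖ := by
        have := abs_nonneg x
        nlinarith
    _ = (1 + |x|) * ‖q‖ := by ring

lemma ell_cont : Continuous ell := by
  unfold ell
  exact (continuous_const.sub (continuous_id.smul continuous_const))

/-- The parametric integral `K`. -/
noncomputable def Kmap (T : Set ℝ) (p : ℝ × ℝ) : ℝ :=
  ∫ x in T, stdNormalCDF (p.1 - p.2 * x) * stdNormalPDF x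

/-- Its derivative. -/
noncomputable def Kder (T : Set ℝ) (p : ℝ × ℝ) : ℝ × ℝ →L[ℝ] ℝ :=
  ∫ x in T, (stdNormalPDF (p.1 - p.2 * x) * stdNormalPDF x) • ell x

lemma Fprime_cont (x : ℝ) :
    Continuous fun p : ℝ × ℝ => (stdNormalPDF (p.1 - p.2 * x) * stdNormalPDF x) • ell x := by
  exact (((pdf_cont.comp (continuous_fst.sub (continuous_snd.mul continuous_const))).mul
    continuous_const).smul continuous_const)

lemma Fprime_cont_x (p : ℝ × ℝ) :
    Continuous fun x : ℝ => (stdNormalPDF (p.1 - p.2 * x) * stdNormalPDF x) • ell x := by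
  exact (((pdf_cont.comp (continuous_const.sub (continuous_const.mul continuous_id))).mul
    pdf_cont).smul ell_cont)

lemma bound_integrable : Integrable (fun x : ℝ =>
    (Real.sqrt (2 * Real.pi))⁻¹ * ((1 + |x|) * stdNormalPDF x)) := by
  have habs : Integrable (fun x : ℝ => |x| * stdNormalPDF x) := by
    have hmaj : Integrable (fun x : ℝ =>
        (Real.sqrt (2 * Real.pi))⁻¹ * Real.exp (-(4⁻¹:ℝ) * x ^ 2)) :=
      (integrable_exp_neg_mul_sq (by norm_num : (0:ℝ) < 4⁻¹)).const_mul _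
    refine hmaj.mono ((continuous_abs.mul pdf_cont).aestronglyMeasurable)
      (Filter.Eventually.of_forall fun x => ?_)
    have hx : |x| ≤ Real.exp (x ^ 2 / 4) := by
      have h1 : |x| ≤ 1 + x ^ 2 / 4 := by nlinarith [sq_nonneg (|x| - 2), sq_abs x]
      have h2 : 1 + x ^ 2 / 4 ≤ Real.exp (x ^ 2 / 4) := by
        have := Real.add_one_le_exp (x ^ 2 / 4); linarith
      linarith
    have hnn : (0:ℝ) ≤ |x| * stdNormalPDF x := mul_nonneg (abs_nonneg x) (pdf_pos x).le
    rw [Real.norm_of_nonneg hnn]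
    unfold stdNormalPDF
    rw [Real.norm_of_nonneg (by positivity)]
    have hc : (0:ℝ) < (Real.sqrt (2 * Real.pi))⁻¹ := inv_pos.2 sqrt2pi_pos
    have key : |x| * Real.exp (-x ^ 2 / 2) ≤ Real.exp (-(4⁻¹:ℝ) * x ^ 2) := by
      calc |x| * Real.exp (-x ^ 2 / 2) ≤ Real.exp (x ^ 2 / 4) * Real.exp (-x ^ 2 / 2) := by
            nlinarith [Real.exp_pos (-x ^ 2 / 2)]
        _ = Real.exp (x ^ 2 / 4 + -x ^ 2 / 2) := (Real.exp_add _ _).symm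
        _ = Real.exp (-(4⁻¹:ℝ) * x ^ 2) := by ring_nf
    calc |x| * ((Real.sqrt (2 * Real.pi))⁻¹ * Real.exp (-x ^ 2 / 2))
        = (Real.sqrt (2 * Real.pi))⁻¹ * (|x| * Real.exp (-x ^ 2 / 2)) := by ring
      _ ≤ (Real.sqrt (2 * Real.pi))⁻¹ * Real.exp (-(4⁻¹:ℝ) * x ^ 2) := by
          exact mul_le_mul_of_nonneg_left key hc.le
  have : Integrable (fun x : ℝ => stdNormalPDF x + |x| * stdNormalPDF x) :=
    pdf_integrable.add habs
  refine (this.const_mul ((Real.sqrt (2 * Real.pi))⁻¹)).congr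
    (Filter.Eventually.of_forall fun x => ?_)
  ring

lemma Fprime_norm_le (p : ℝ × ℝ) (x : ℝ) :
    ‖(stdNormalPDF (p.1 - p.2 * x) * stdNormalPDF x) • ell x‖ ≤
      (Real.sqrt (2 * Real.pi))⁻¹ * ((1 + |x|) * stdNormalPDF x) := by
  rw [norm_smul (stdNormalPDF (p.1 - p.2 * x) * stdNormalPDF x) (ell x)]
  have h1 : ‖stdNormalPDF (p.1 - p.2 * x) * stdNormalPDF x‖
      ≤ (Real.sqrt (2 * Real.pi))⁻¹ * stdNormalPDF x := by
    rw [Real.norm_of_nonneg (mul_nonneg (pdf_pos _).le (pdf_pos _).le)]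
    exact mul_le_mul_of_nonneg_right (pdf_le _) (pdf_pos x).le
  have h2 := ell_norm_le x
  have h3 : (0:ℝ) ≤ ‖ell x‖ := norm_nonneg _
  have h4 : (0:ℝ) < stdNormalPDF x := pdf_pos x
  have h5 : (0:ℝ) < (Real.sqrt (2 * Real.pi))⁻¹ := inv_pos.2 sqrt2pi_pos
  calc ‖stdNormalPDF (p.1 - p.2 * x) * stdNormalPDF x‖ * ‖ell x‖
      ≤ ((Real.sqrt (2 * Real.pi))⁻¹ * stdNormalPDF x) * (1 + |x|) := by
        have := abs_nonneg x
        nlinarith [norm_nonneg (stdNormalPDF (p.1 - p.2 * x) * stdNormalPDF x)]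
    _ = (Real.sqrt (2 * Real.pi))⁻¹ * ((1 + |x|) * stdNormalPDF x) := by ring

lemma K_hasFDerivAt (T : Set ℝ) (hT : MeasurableSet T) (p : ℝ × ℝ) :
    HasFDerivAt (Kmap T) (Kder T p) p := by
  have h := hasFDerivAt_integral_of_dominated_of_fderiv_le
    (𝕜 := ℝ) (H := ℝ × ℝ) (α := ℝ) (E := ℝ) (μ := volume.restrict T)
    (F := fun q x => stdNormalCDF (q.1 - q.2 * x) * stdNormalPDF x)
    (F' := fun q x => (stdNormalPDF (q.1 - q.2 * x) * stdNormalPDF x) • ell x)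
    (x₀ := p)
    (bound := fun x => (Real.sqrt (2 * Real.pi))⁻¹ * ((1 + |x|) * stdNormalPDF x))
    (Metric.ball_mem_nhds p one_pos)
    (Filter.Eventually.of_forall fun q =>
      (((cdf_cont.comp (continuous_const.sub (continuous_const.mul continuous_id))).mul
        pdf_cont).aestronglyMeasurable))
    ?hint
    ((Fprime_cont_x p).aestronglyMeasurable)
    (Filter.Eventually.of_forall fun x q _ => Fprime_norm_le q x)
    (bound_integrable.restrict)
    (Filter.Eventually.of_forall fun x q _ => ?hdiff)
  · exact h
  case hint =>
    refine (pdf_integrable.restrict (s := T)).mono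
      (((cdf_cont.comp (continuous_const.sub (continuous_const.mul continuous_id))).mul
        pdf_cont).aestronglyMeasurable)
      (Filter.Eventually.of_forall fun x => ?_)
    have h0 := cdf_mem_Ioo (p.1 - p.2 * x)
    rw [Real.norm_of_nonneg (mul_nonneg h0.1.le (pdf_pos x).le),
      Real.norm_of_nonneg (pdf_pos x).le]
    nlinarith [pdf_pos x, h0.2]
  case hdiff =>
    have hin : HasFDerivAt (fun q : ℝ × ℝ => q.1 - q.2 * x) (ell x) q :=
      hasFDerivAt_fst.sub (hasFDerivAt_snd.mul_const x)
    have hΦ : HasDerivAt stdNormalCDF (stdNormalPDF (q.1 - q.2 * x)) (q.1 - q.2 * x) :=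
      cdf_hasDerivAt _
    have hcomp := hΦ.comp_hasFDerivAt q hin
    have := hcomp.mul_const (stdNormalPDF x)
    refine this.congr_fderiv ?_
    rw [smul_smul, mul_comm]

lemma Kder_cont (T : Set ℝ) : Continuous (Kder T) := by
  unfold Kder
  have h1 : ∀ q : ℝ × ℝ, AEStronglyMeasurable
      (fun x : ℝ => (stdNormalPDF (q.1 - q.2 * x) * stdNormalPDF x) • ell x)
      (volume.restrict T) := fun q => (Fprime_cont_x q).aestronglyMeasurable
  have h2 : ∀ q : ℝ × ℝ, ∀ᵐ x ∂(volume.restrict T),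
      ‖(stdNormalPDF (q.1 - q.2 * x) * stdNormalPDF x) • ell x‖ ≤
        (Real.sqrt (2 * Real.pi))⁻¹ * ((1 + |x|) * stdNormalPDF x) :=
    fun q => Filter.Eventually.of_forall fun x => Fprime_norm_le q x
  have h4 : ∀ᵐ x ∂(volume.restrict T), Continuous
      (fun q : ℝ × ℝ => (stdNormalPDF (q.1 - q.2 * x) * stdNormalPDF x) • ell x) :=
    Filter.Eventually.of_forall fun x => Fprime_cont x
  exact continuous_of_dominated h1 h2 bound_integrable.restrict h4

lemma K_contDiff (T : Set ℝ) (hT : MeasurableSet T) : ContDiff ℝ 1 (Kmap T) := by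
  rw [contDiff_one_iff_fderiv]
  refine ⟨fun p => (K_hasFDerivAt T hT p).differentiableAt, ?_⟩
  have h : fderiv ℝ (Kmap T) = Kder T := funext fun p => (K_hasFDerivAt T hT p).fderiv
  rw [h]
  exact Kder_cont T

lemma image_Iio (b : ℝ) : stdNormalCDF '' Iio b = Ioo 0 (stdNormalCDF b) := by
  ext y; constructor
  · rintro ⟨x, hx, rfl⟩
    exact ⟨(cdf_mem_Ioo x).1, cdf_strictMono hx⟩
  · rintro ⟨h1, h2⟩
    have hy1 : y < 1 := h2.trans_le (cdf_mem_Ioo b).2.le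
    obtain ⟨x, hx⟩ := cdf_surj ⟨h1, hy1⟩
    exact ⟨x, cdf_strictMono.lt_iff_lt.1 (by rw [hx]; exact h2), hx⟩

lemma image_univ' : stdNormalCDF '' univ = Ioo 0 1 := by
  rw [Set.image_univ]
  ext y; constructor
  · rintro ⟨x, rfl⟩; exact cdf_mem_Ioo x
  · exact fun hy => cdf_surj hy

lemma change_of_var (Sset : Set ℝ) (hS : MeasurableSet Sset) (m r : ℝ) :
    ∫ w in stdNormalCDF '' Sset, stdNormalCDF (m - r * stdNormalCDFInv w) = Kmap Sset (m, r) := by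
  rw [integral_image_eq_integral_abs_deriv_smul hS
    (fun x _ => (cdf_hasDerivAt x).hasDerivWithinAt) cdf_strictMono.injective.injOn]
  unfold Kmap
  refine setIntegral_congr_fun hS fun x _ => ?_
  rw [cdfInv_cdf, abs_of_pos (pdf_pos x), smul_eq_mul]
  ring

lemma psi_eq_K {u v : ℝ} (hu0 : 0 < u) (hv : v ∈ Ioo (0:ℝ) 1) (Sset : Set ℝ)
    (himg : stdNormalCDF '' Sset = Ioo 0 u)
    {p : ℝ × ℝ} (hp : 0 < p.1 ∧ p.1 < p.2) :
    psi p.1 p.2 u v = Kmap Sset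
      (Real.sqrt p.2 * stdNormalCDFInv v / Real.sqrt (p.2 - p.1),
       Real.sqrt p.1 / Real.sqrt (p.2 - p.1)) := by
  obtain ⟨hs, hst⟩ := hp
  have hS : MeasurableSet Sset := by
    have : Sset = stdNormalCDF ⁻¹' (Ioo 0 u) := by
      ext x
      constructor
      · intro hx
        have : stdNormalCDF x ∈ stdNormalCDF '' Sset := mem_image_of_mem _ hx
        rw [himg] at this
        exact this
      · intro hx
        have : stdNormalCDF x ∈ stdNormalCDF '' Sset := by rw [himg]; exact hx
        obtain ⟨y, hy, hxy⟩ := this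
        rwa [← cdf_strictMono.injective hxy]
    rw [this]
    exact measurableSet_Ioo.preimage cdf_cont.measurable
  have hts : 0 < p.2 - p.1 := sub_pos.2 hst
  have habs : |p.2 - p.1| = p.2 - p.1 := abs_of_pos hts
  have h0 : 0 < |p.2 - p.1| := by rw [habs]; exact hts
  rw [psi, if_pos h0]
  have hInt : ∀ w, psiIntegrand p.1 p.2 v w =
      stdNormalCDF (Real.sqrt p.2 * stdNormalCDFInv v / Real.sqrt (p.2 - p.1) -
        Real.sqrt p.1 / Real.sqrt (p.2 - p.1) * stdNormalCDFInv w) := fun w => by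
    rw [psiIntegrand, if_neg (not_le.2 hv.1), if_neg (not_le.2 hv.2),
      max_eq_right hst.le, min_eq_left hst.le, habs]
    congr 1
    rw [sub_div]
    ring
  rw [intervalIntegral.integral_of_le hu0.le, MeasureTheory.integral_Ioc_eq_integral_Ioo,
    ← himg, setIntegral_congr_fun (himg ▸ measurableSet_Ioo) fun w _ => hInt w,
    change_of_var Sset hS]

lemma mr_contDiffOn (c : ℝ) : ContDiffOn ℝ 1
    (fun p : ℝ × ℝ => (Real.sqrt p.2 * c / Real.sqrt (p.2 - p.1),
      Real.sqrt p.1 / Real.sqrt (p.2 - p.1)))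
    {p : ℝ × ℝ | 0 < p.1 ∧ p.1 < p.2} := by
  intro p hp
  obtain ⟨hs, hst⟩ := hp
  have ht : 0 < p.2 := hs.trans hst
  have hts : 0 < p.2 - p.1 := sub_pos.2 hst
  apply ContDiffAt.contDiffWithinAt
  have h1 : ContDiffAt ℝ 1 (fun q : ℝ × ℝ => Real.sqrt q.1) p :=
    (Real.contDiffAt_sqrt hs.ne').comp p contDiffAt_fst
  have h2 : ContDiffAt ℝ 1 (fun q : ℝ × ℝ => Real.sqrt q.2) p :=
    (Real.contDiffAt_sqrt ht.ne').comp p contDiffAt_snd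
  have h3 : ContDiffAt ℝ 1 (fun q : ℝ × ℝ => Real.sqrt (q.2 - q.1)) p :=
    (Real.contDiffAt_sqrt hts.ne').comp p (contDiffAt_snd.sub contDiffAt_fst)
  have hne : Real.sqrt (p.2 - p.1) ≠ 0 := (Real.sqrt_pos.2 hts).ne'
  exact ((h2.mul contDiffAt_const).div h3 hne).prodMk (h1.div h3 hne)


/-- For every fixed u, v ∈ [0,1], the mapping (s,t) ↦ ψ(s,t;u,v) is continuously
differentiable on the open set {(s,t) : 0 < s < t}. -/
theorem psi_contDiffOn (u v : ℝ) (hu : u ∈ Set.Icc (0:ℝ) 1) (hv : v ∈ Set.Icc (0:ℝ) 1) :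
    ContDiffOn ℝ 1 (fun p : ℝ × ℝ => psi p.1 p.2 u v)
      {p : ℝ × ℝ | 0 < p.1 ∧ p.1 < p.2} := by
  have habs : ∀ p : ℝ × ℝ, p ∈ {p : ℝ × ℝ | 0 < p.1 ∧ p.1 < p.2} → 0 < |p.2 - p.1| :=
    fun p hp => by rw [abs_of_pos (sub_pos.2 hp.2)]; exact sub_pos.2 hp.2
  rcases le_or_gt v 0 with hv0 | hv0
  · refine (contDiffOn_const (c := (0:ℝ))).congr fun p hp => ?_
    rw [psi, if_pos (habs p hp)]
    simp [psiIntegrand, hv0]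
  rcases le_or_gt 1 v with hv1 | hv1
  · refine (contDiffOn_const (c := u)).congr fun p hp => ?_
    rw [psi, if_pos (habs p hp)]
    have : ∀ w, psiIntegrand p.1 p.2 v w = 1 := fun w => by
      rw [psiIntegrand, if_neg (not_le.2 hv0), if_pos hv1]
    simp [this]
  rcases eq_or_lt_of_le hu.1 with hu0 | hu0
  · refine (contDiffOn_const (c := (0:ℝ))).congr fun p hp => ?_
    rw [psi, if_pos (habs p hp), ← hu0]
    simp
  -- main case : 0 < u ≤ 1, 0 < v < 1
  have key : ∀ Sset : Set ℝ, MeasurableSet Sset → stdNormalCDF '' Sset = Ioo 0 u →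
      ContDiffOn ℝ 1 (fun p : ℝ × ℝ => psi p.1 p.2 u v)
        {p : ℝ × ℝ | 0 < p.1 ∧ p.1 < p.2} := by
    intro Sset hS himg
    have hcomp : ContDiffOn ℝ 1
        ((Kmap Sset) ∘ (fun p : ℝ × ℝ => (Real.sqrt p.2 * stdNormalCDFInv v / Real.sqrt (p.2 - p.1),
          Real.sqrt p.1 / Real.sqrt (p.2 - p.1))))
        {p : ℝ × ℝ | 0 < p.1 ∧ p.1 < p.2} :=
      (K_contDiff Sset hS).comp_contDiffOn (mr_contDiffOn (stdNormalCDFInv v))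
    exact hcomp.congr fun p hp => psi_eq_K hu0 ⟨hv0, hv1⟩ Sset himg hp
  rcases eq_or_lt_of_le hu.2 with hu1 | hu1
  · refine key univ MeasurableSet.univ ?_
    rw [image_univ', hu1]
  · refine key (Iio (stdNormalCDFInv u)) measurableSet_Iio ?_
    rw [image_Iio, cdf_cdfInv ⟨hu0, hu1⟩]
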